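/- arXiv:2603.04298 — 3 statements merged into one kernel-verified Lean document; each statement's English description precedes it below -/
import Mathlib

section
/- Let g ∈ ℝ[[w]] be nonzero with ord(g) = k ≥ 1. Then dim_ℝ(ℝ[[w]]/⟨g⟩) − 2·dim_ℝ(J_max) equals 1 if k is odd and 0 if k is even, where J_max is a maximal square-zero ideal of ℝ[[w]]/⟨g⟩. -/
open PowerSeries Polynomial

noncomputable section

/-- finrank of ℝ[X]/(X^d) is d -/
lemma aux_finrank_poly (d : ℕ) :
    Module.finrank ℝ (Polynomial ℝ ⧸ Ideal.span {(Polynomial.X : Polynomial ℝ) ^ d}) = d := by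
  have h : Module.finrank ℝ (AdjoinRoot ((Polynomial.X : Polynomial ℝ) ^ d)) = d := by
    rw [(AdjoinRoot.powerBasis' (monic_X.pow d)).finrank]
    simp [AdjoinRoot.powerBasis']
  exact h

lemma aux_ker (d : ℕ) :
    RingHom.ker ((Ideal.Quotient.mkₐ ℝ (Ideal.span {(PowerSeries.X : PowerSeries ℝ) ^ d})).comp
      (Polynomial.coeToPowerSeries.algHom (R := ℝ) ℝ)) = Ideal.span {(Polynomial.X : Polynomial ℝ) ^ d} := by
  ext p
  simp only [RingHom.mem_ker, AlgHom.coe_comp, Function.comp_apply,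
    Polynomial.coeToPowerSeries.algHom_apply, Ideal.Quotient.mkₐ_eq_mk,
    Ideal.Quotient.eq_zero_iff_mem, Ideal.mem_span_singleton]
  rw [Algebra.algebraMap_self, PowerSeries.map_id]
  rw [PowerSeries.X_pow_dvd_iff, Polynomial.X_pow_dvd_iff]
  simp [Polynomial.coeff_coe]

lemma aux_surj (d : ℕ) :
    Function.Surjective ((Ideal.Quotient.mkₐ ℝ (Ideal.span {(PowerSeries.X : PowerSeries ℝ) ^ d})).comp
      (Polynomial.coeToPowerSeries.algHom (R := ℝ) ℝ)) := by
  intro x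
  obtain ⟨f, rfl⟩ := Ideal.Quotient.mk_surjective x
  refine ⟨PowerSeries.trunc d f, ?_⟩
  simp only [AlgHom.coe_comp, Function.comp_apply, Polynomial.coeToPowerSeries.algHom_apply,
    Ideal.Quotient.mkₐ_eq_mk, Algebra.algebraMap_self, PowerSeries.map_id]
  rw [Ideal.Quotient.eq, Ideal.mem_span_singleton, PowerSeries.X_pow_dvd_iff]
  intro m hm
  simp [PowerSeries.coeff_trunc, hm, Polynomial.coeff_coe]

/-- finrank of ℝ⟦X⟧/(X^d) is d -/
lemma aux_finrank (d : ℕ) :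
    Module.finrank ℝ (PowerSeries ℝ ⧸ Ideal.span {(PowerSeries.X : PowerSeries ℝ) ^ d}) = d := by
  have e := Ideal.quotientKerAlgEquivOfSurjective (aux_surj d)
  have e := (Ideal.quotientEquivAlgOfEq ℝ (aux_ker d)).symm.trans e
  rw [← e.toLinearEquiv.finrank_eq, aux_finrank_poly]

lemma aux_X_pow_dvd_X_pow {a b : ℕ} :
    ((PowerSeries.X : PowerSeries ℝ) ^ a ∣ PowerSeries.X ^ b) ↔ a ≤ b := by
  constructor
  · intro h
    by_contra hab
    push_neg at hab
    rw [PowerSeries.X_pow_dvd_iff] at h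
    have := h b hab
    simp at this
  · exact fun h => pow_dvd_pow _ h

set_option maxHeartbeats 1000000 in
/-- For nonzero `g ∈ ℝ⟦w⟧` with `ord(g) = k ≥ 1`, and any maximal
square-zero ideal `J` of `ℝ⟦w⟧/⟨g⟩`, the quantity `dim_ℝ(ℝ⟦w⟧/⟨g⟩) − 2·dim_ℝ J`
is `1` if `k` is odd and `0` if `k` is even. -/
theorem stmt5 (g : PowerSeries ℝ) (hg : g ≠ 0) (k : ℕ) (hk1 : 1 ≤ k) (hk : g.order = k)
    (J : Ideal (PowerSeries ℝ ⧸ Ideal.span {g}))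
    (hJ : J * J = ⊥)
    (hJmax : ∀ J' : Ideal (PowerSeries ℝ ⧸ Ideal.span {g}), J' * J' = ⊥ → J ≤ J' → J' = J) :
    Module.finrank ℝ (PowerSeries ℝ ⧸ Ideal.span {g}) -
        2 * Module.finrank ℝ (Submodule.restrictScalars ℝ J) =
      if Odd k then 1 else 0 := by
  -- span {g} = span {X ^ k}
  have hlift : g.order.lift (PowerSeries.order_finite_iff_ne_zero.mpr hg) = k := by
    have h1 : ((g.order.lift (PowerSeries.order_finite_iff_ne_zero.mpr hg) : ℕ) : ℕ∞) = g.order :=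
      ENat.coe_lift _ _
    exact_mod_cast h1.trans hk
  have hspan : Ideal.span {g} = Ideal.span {(PowerSeries.X : PowerSeries ℝ) ^ k} := by
    conv_lhs => rw [← PowerSeries.X_pow_order_mul_divXPowOrder (f := g)]
    rw [hk, ENat.toNat_coe]
    exact Ideal.span_singleton_mul_right_unit (PowerSeries.isUnit_divided_by_X_pow_order hg) _
  have hmem : ∀ f : PowerSeries ℝ, f ∈ Ideal.span {g} ↔ (PowerSeries.X : PowerSeries ℝ) ^ k ∣ f := by
    intro f; rw [hspan, Ideal.mem_span_singleton]
  set π := Ideal.Quotient.mk (Ideal.span {g}) with hπ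
  -- finrank of the quotient is k
  have hfinQ : Module.finrank ℝ (PowerSeries ℝ ⧸ Ideal.span {g}) = k := by
    have e := Ideal.quotientEquivAlgOfEq ℝ hspan
    rw [e.toLinearEquiv.finrank_eq, aux_finrank]
  -- classify J
  have hJne : Ideal.comap π J ≠ ⊥ := by
    intro hbot
    have : g ∈ Ideal.comap π J := by
      simp [Ideal.mem_comap, hπ, Ideal.Quotient.eq_zero_iff_mem.mpr (Ideal.subset_span rfl)]
    rw [hbot] at this
    exact hg this
  obtain ⟨n, hn⟩ := IsDiscreteValuationRing.ideal_eq_span_pow_irreducible hJne PowerSeries.X_irreducible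
  have hJeq : J = Ideal.span {π (PowerSeries.X ^ n)} := by
    have := Ideal.map_comap_of_surjective π Ideal.Quotient.mk_surjective J
    rw [hn, Ideal.map_span, Set.image_singleton] at this
    exact this.symm
  -- square-zero criterion
  have hsq : ∀ m : ℕ, Ideal.span {π (PowerSeries.X ^ m)} * Ideal.span {π (PowerSeries.X ^ m)} = ⊥
      ↔ k ≤ 2 * m := by
    intro m
    rw [Ideal.span_singleton_mul_span_singleton, Ideal.span_singleton_eq_bot, ← map_mul,
      ← pow_add, hπ, Ideal.Quotient.eq_zero_iff_mem, hmem, aux_X_pow_dvd_X_pow]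
    omega
  have hkn : k ≤ 2 * n := (hsq n).mp (hJeq ▸ hJ)
  set m0 := (k + 1) / 2 with hm0
  have hnm0 : m0 ≤ n := by omega
  have hJ' : J = Ideal.span {π (PowerSeries.X ^ m0)} := by
    refine (hJmax _ ((hsq m0).mpr (by omega)) ?_).symm
    rw [hJeq]
    rw [Ideal.span_singleton_le_span_singleton]
    exact_mod_cast (map_dvd π (pow_dvd_pow PowerSeries.X hnm0))
  -- finrank of J
  have hm0k : m0 ≤ k := by omega
  set d := k - m0 with hd
  -- linear map f ↦ π (X^m0 * f)
  let L : PowerSeries ℝ →ₗ[ℝ] (PowerSeries ℝ ⧸ Ideal.span {g}) :=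
    (Ideal.Quotient.mkₐ ℝ (Ideal.span {g})).toLinearMap ∘ₗ
      LinearMap.mulLeft ℝ ((PowerSeries.X : PowerSeries ℝ) ^ m0)
  have hLapp : ∀ f, L f = π ((PowerSeries.X : PowerSeries ℝ) ^ m0 * f) := fun f => rfl
  have hrange : LinearMap.range L = Submodule.restrictScalars ℝ J := by
    ext x
    simp only [LinearMap.mem_range, Submodule.restrictScalars_mem]
    constructor
    · rintro ⟨f, rfl⟩
      rw [hLapp, map_mul, hJ']
      exact Ideal.mul_mem_right _ _ (Ideal.subset_span rfl)
    · intro hx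
      rw [hJ', Ideal.mem_span_singleton'] at hx
      obtain ⟨a, ha⟩ := hx
      obtain ⟨f, rfl⟩ := Ideal.Quotient.mk_surjective a
      exact ⟨f, by rw [hLapp, map_mul, mul_comm]; exact ha⟩
  have hker : LinearMap.ker L =
      Submodule.restrictScalars ℝ (Ideal.span {(PowerSeries.X : PowerSeries ℝ) ^ d}) := by
    ext f
    simp only [LinearMap.mem_ker, Submodule.restrictScalars_mem, hLapp]
    rw [hπ, Ideal.Quotient.eq_zero_iff_mem, hmem, Ideal.mem_span_singleton]
    have hX : (PowerSeries.X : PowerSeries ℝ) ^ m0 ≠ 0 := pow_ne_zero _ PowerSeries.X_ne_zero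
    constructor
    · intro h
      have h2 : (PowerSeries.X : PowerSeries ℝ) ^ m0 * PowerSeries.X ^ d ∣
          PowerSeries.X ^ m0 * f := by rwa [← pow_add, hd, Nat.add_sub_cancel' hm0k]
      exact (mul_dvd_mul_iff_left hX).mp h2
    · intro h
      have : (PowerSeries.X : PowerSeries ℝ) ^ m0 * PowerSeries.X ^ d ∣
          PowerSeries.X ^ m0 * f := mul_dvd_mul_left _ h
      rwa [← pow_add, hd, Nat.add_sub_cancel' hm0k] at this
  have hfinJ : Module.finrank ℝ (Submodule.restrictScalars ℝ J) = d := by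
    have e1 := L.quotKerEquivRange
    rw [hrange, hker] at e1
    have e2 := Submodule.Quotient.restrictScalarsEquiv ℝ
      (Ideal.span {(PowerSeries.X : PowerSeries ℝ) ^ d})
    have : Module.finrank ℝ (Submodule.restrictScalars ℝ J)
        = Module.finrank ℝ (PowerSeries ℝ ⧸ Ideal.span {(PowerSeries.X : PowerSeries ℝ) ^ d}) := by
      rw [← e1.finrank_eq, e2.finrank_eq]
    rw [this, aux_finrank]
  rw [hfinQ, hfinJ]
  rcases Nat.even_or_odd k with he | ho
  · rw [if_neg (by simpa [Nat.not_odd_iff_even])]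
    obtain ⟨t, ht⟩ := he
    omega
  · rw [if_pos ho]
    obtain ⟨t, ht⟩ := ho
    omega
end
end

section
/- Consider the ideal I = ⟨x − y + xy, y − z + yz, z − x + zx⟩ in ℝ[[x,y,z]]. The quotient algebra ℝ[[x,y,z]]/I is a 2-dimensional real vector space, with basis the classes of 1 and z. -/
set_option synthInstance.maxHeartbeats 1000000
set_option maxHeartbeats 1000000

open MvPowerSeries

noncomputable section Stmt10Aux

private abbrev AA := MvPowerSeries (Fin 3) ℝ

private abbrev Cc : ℝ →+* AA := MvPowerSeries.C (σ := Fin 3) (R := ℝ)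

private abbrev cst : AA →+* ℝ := MvPowerSeries.constantCoeff (σ := Fin 3) (R := ℝ)

lemma stmt10_coeff_single_mul (i : Fin 3) (p q : AA) :
    MvPowerSeries.coeff (R := ℝ) (Finsupp.single i 1) (p * q) =
      cst p * MvPowerSeries.coeff (R := ℝ) (Finsupp.single i 1) q +
      MvPowerSeries.coeff (R := ℝ) (Finsupp.single i 1) p * cst q := by
  classical
  rw [MvPowerSeries.coeff_mul, Finsupp.antidiagonal_single]
  rw [show Finset.HasAntidiagonal.antidiagonal (1 : ℕ) = {(0, 1), (1, 0)} from rfl]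
  simp [MvPowerSeries.coeff_zero_eq_constantCoeff]

lemma stmt10_decomp (f : AA) :
    ∃ a b c : AA, f = Cc (cst f) + X 0 * a + X 1 * b + X 2 * c := by
  classical
  set s : AA := fun m => if m 0 = 0 then f m else 0 with hs
  set t : AA := fun m => if m 0 = 0 ∧ m 1 = 0 then f m else 0 with ht
  have h1 : (X 0 : AA) ∣ f - s := by
    rw [MvPowerSeries.X_dvd_iff]
    intro m hm
    rw [map_sub, MvPowerSeries.coeff_apply, MvPowerSeries.coeff_apply, hs]
    simp [hm]
  have h2 : (X 1 : AA) ∣ s - t := by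
    rw [MvPowerSeries.X_dvd_iff]
    intro m hm
    rw [map_sub, MvPowerSeries.coeff_apply, MvPowerSeries.coeff_apply, hs, ht]
    by_cases h0 : m 0 = 0 <;> simp [h0, hm]
  have h3 : (X 2 : AA) ∣ t - Cc (cst f) := by
    rw [MvPowerSeries.X_dvd_iff]
    intro m hm
    rw [map_sub, MvPowerSeries.coeff_apply, MvPowerSeries.coeff_C, ht]
    by_cases h0 : m = 0
    · subst h0
      have hc : cst f = f 0 := rfl
      simp [hc]
    · have hne : ¬(m 0 = 0 ∧ m 1 = 0) := by
        intro ⟨ha, hb⟩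
        exact h0 (Finsupp.ext fun i => by fin_cases i <;> assumption)
      simp [h0, hne]
  obtain ⟨a, ha⟩ := h1
  obtain ⟨b, hb⟩ := h2
  obtain ⟨c, hc⟩ := h3
  exact ⟨a, b, c, by linear_combination ha + hb + hc⟩

lemma stmt10_main :
    ∀ (I : Ideal AA), I = Ideal.span {X 0 - X 1 + X 0 * X 1, X 1 - X 2 + X 1 * X 2,
        X 2 - X 0 + X 2 * X 0} →
    Module.finrank ℝ (AA ⧸ I) = 2 ∧
    ∃ b : Module.Basis (Fin 2) ℝ (AA ⧸ I),
      b 0 = Ideal.Quotient.mk I 1 ∧ b 1 = Ideal.Quotient.mk I (X 2) := by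
  classical
  intro I hI
  set x : AA := X 0 with hxdef
  set y : AA := X 1 with hydef
  set z : AA := X 2 with hzdef
  set g1 : AA := x - y + x * y with hg1def
  set g2 : AA := y - z + y * z with hg2def
  set g3 : AA := z - x + z * x with hg3def
  have hg1 : g1 ∈ I := hI ▸ Ideal.subset_span (by left; rfl)
  have hg2 : g2 ∈ I := hI ▸ Ideal.subset_span (by right; left; rfl)
  have hg3 : g3 ∈ I := hI ▸ Ideal.subset_span (by right; right; rfl)
  -- z^2 ∈ I
  have h3z : (3 : AA) * z ^ 2 ∈ I := by
    have hid : (3 : AA) * z ^ 2 =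
        g1 * (1 - z ^ 2) + g2 * (1 - 2 * z) + g3 * (1 + 2 * z) + g2 * g3 := by
      rw [hg1def, hg2def, hg3def]; ring
    rw [hid]
    exact add_mem (add_mem (add_mem (I.mul_mem_right _ hg1) (I.mul_mem_right _ hg2))
      (I.mul_mem_right _ hg3)) (I.mul_mem_right _ hg2)
  have hz2 : z ^ 2 ∈ I := by
    have h13 : Cc (1 / 3) * ((3 : AA) * z ^ 2) = z ^ 2 := by
      rw [show (3 : AA) = Cc (3 : ℝ) from (map_ofNat Cc 3).symm, ← mul_assoc, ← map_mul]
      norm_num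
    rw [← h13]
    exact I.mul_mem_left _ h3z
  -- x - z ∈ I
  have hxz : x - z ∈ I := by
    have hu : IsUnit (1 - z : AA) := by
      rw [MvPowerSeries.isUnit_iff_constantCoeff]; simp [hzdef, constantCoeff_X]
    obtain ⟨u, hu⟩ := hu
    have key : (x - z) * (1 - z) = z ^ 2 - g3 := by rw [hg3def]; ring
    have : x - z = (z ^ 2 - g3) * ↑u⁻¹ := by
      calc x - z = (x - z) * (↑u * ↑u⁻¹) := by rw [Units.mul_inv, mul_one]
        _ = ((x - z) * (1 - z)) * ↑u⁻¹ := by rw [hu]; ring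
        _ = (z ^ 2 - g3) * ↑u⁻¹ := by rw [key]
    rw [this]
    exact I.mul_mem_right _ (sub_mem hz2 hg3)
  -- y - z ∈ I
  have hyz : y - z ∈ I := by
    have hu : IsUnit (1 + z : AA) := by
      rw [MvPowerSeries.isUnit_iff_constantCoeff]; simp [hzdef, constantCoeff_X]
    obtain ⟨u, hu⟩ := hu
    have key : (y - z) * (1 + z) = g2 - z ^ 2 := by rw [hg2def]; ring
    have : y - z = (g2 - z ^ 2) * ↑u⁻¹ := by
      calc y - z = (y - z) * (↑u * ↑u⁻¹) := by rw [Units.mul_inv, mul_one]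
        _ = ((y - z) * (1 + z)) * ↑u⁻¹ := by rw [hu]; ring
        _ = (g2 - z ^ 2) * ↑u⁻¹ := by rw [key]
    rw [this]
    exact I.mul_mem_right _ (sub_mem hg2 hz2)
  have hzx : z * x ∈ I := by
    have : z * x = z * (x - z) + z ^ 2 := by ring
    rw [this]; exact add_mem (I.mul_mem_left _ hxz) hz2
  have hzy : z * y ∈ I := by
    have : z * y = z * (y - z) + z ^ 2 := by ring
    rw [this]; exact add_mem (I.mul_mem_left _ hyz) hz2
  -- constant coefficient vanishes on I
  have hI0 : ∀ f ∈ I, cst f = 0 := by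
    have : I ≤ RingHom.ker cst := by
      rw [hI, Ideal.span_le]
      rintro f (rfl | rfl | rfl) <;>
        simp [RingHom.mem_ker, hg1def, hg2def, hg3def, hxdef, hydef, hzdef,
          map_sub, map_add, map_mul, constantCoeff_X]
    intro f hf
    exact this hf
  -- the linear functional L = sum of the three degree-one coefficients
  set L : AA →ₗ[ℝ] ℝ := MvPowerSeries.coeff (R := ℝ) (Finsupp.single 0 1) +
      MvPowerSeries.coeff (R := ℝ) (Finsupp.single 1 1) +
      MvPowerSeries.coeff (R := ℝ) (Finsupp.single 2 1) with hLdef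
  have hLapp : ∀ f : AA, L f = MvPowerSeries.coeff (R := ℝ) (Finsupp.single 0 1) f +
      MvPowerSeries.coeff (R := ℝ) (Finsupp.single 1 1) f +
      MvPowerSeries.coeff (R := ℝ) (Finsupp.single 2 1) f := fun f => rfl
  have hLmul : ∀ p g : AA, cst g = 0 → L (p * g) = cst p * L g := by
    intro p g hg0
    simp only [hLapp, stmt10_coeff_single_mul, hg0, mul_zero, add_zero]
    ring
  have hcoeffX : ∀ i j : Fin 3, MvPowerSeries.coeff (R := ℝ) (Finsupp.single i 1) (X j : AA) =
      if i = j then 1 else 0 := by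
    intro i j
    rw [MvPowerSeries.coeff_X]
    by_cases h : i = j
    · simp [h]
    · have : Finsupp.single i 1 ≠ Finsupp.single (j : Fin 3) 1 := by
        simp [Finsupp.single_eq_single_iff, h]
      simp [this, h]
  have hXX : ∀ i j k : Fin 3,
      MvPowerSeries.coeff (R := ℝ) (Finsupp.single i 1) ((X j : AA) * X k) = 0 := by
    intro i j k
    rw [stmt10_coeff_single_mul]
    simp [constantCoeff_X]
  have hLg1 : L g1 = 0 := by
    rw [hg1def]
    simp only [hLapp, map_add, map_sub, hXX]
    simp [hcoeffX, hxdef, hydef, hzdef, hXX]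
  have hLg2 : L g2 = 0 := by
    rw [hg2def]
    simp only [hLapp, map_add, map_sub, hXX]
    simp [hcoeffX, hxdef, hydef, hzdef, hXX]
  have hLg3 : L g3 = 0 := by
    rw [hg3def]
    simp only [hLapp, map_add, map_sub, hXX]
    simp [hcoeffX, hxdef, hydef, hzdef, hXX]
  have hLI : ∀ f ∈ I, L f = 0 := by
    intro f hf
    rw [hI] at hf
    obtain ⟨p, f', hf', rfl⟩ := Ideal.mem_span_insert.mp hf
    obtain ⟨q, f'', hf'', rfl⟩ := Ideal.mem_span_insert.mp hf'
    obtain ⟨r, rfl⟩ := Ideal.mem_span_singleton'.mp hf''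
    rw [map_add, map_add, hLmul p g1 (hI0 g1 hg1), hLmul q g2 (hI0 g2 hg2),
      hLmul r g3 (hI0 g3 hg3), hLg1, hLg2, hLg3]
    ring
  -- quotient map and smul
  set Q : AA →+* AA ⧸ I := Ideal.Quotient.mk I with hQdef
  have hsmul : ∀ (r : ℝ) (w : AA), Q (Cc r * w) = r • Q w := by
    intro r w
    have h1 : Cc r * w = r • w := by
      rw [Algebra.smul_def, MvPowerSeries.algebraMap_apply, Algebra.algebraMap_self_apply]
    rw [h1]
    exact map_smul (Ideal.Quotient.mkₐ ℝ I) r w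
  -- spanning
  have hspan : ∀ f : AA, ∃ s t : ℝ, Q f = s • Q 1 + t • Q z := by
    intro f
    obtain ⟨a, b, c, hf⟩ := stmt10_decomp f
    obtain ⟨a', b', c', hg⟩ := stmt10_decomp (a + b + c)
    refine ⟨cst f, cst (a + b + c), ?_⟩
    have hmem : f - (Cc (cst f) * 1 + Cc (cst (a + b + c)) * z) ∈ I := by
      have hid : f - (Cc (cst f) * 1 + Cc (cst (a + b + c)) * z) =
          (x - z) * a + (y - z) * b + (z * x) * a' + (z * y) * b' + z ^ 2 * c' := by
        linear_combination hf + z * hg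
      rw [hid]
      exact add_mem (add_mem (add_mem (add_mem (I.mul_mem_right _ hxz)
        (I.mul_mem_right _ hyz)) (I.mul_mem_right _ hzx)) (I.mul_mem_right _ hzy))
        (I.mul_mem_right _ hz2)
    have := (Ideal.Quotient.eq (I := I)).mpr hmem
    rw [hQdef] at *
    rw [this, map_add, hsmul, hsmul]
  -- linear independence
  set v : Fin 2 → AA ⧸ I := ![Q 1, Q z] with hvdef
  have hli : LinearIndependent ℝ v := by
    rw [Fintype.linearIndependent_iff]
    intro g hg
    have hsum : (g 0) • Q 1 + (g 1) • Q z = 0 := by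
      simpa [hvdef, Fin.sum_univ_two] using hg
    have hmem : Cc (g 0) * 1 + Cc (g 1) * z ∈ I := by
      rw [← Ideal.Quotient.eq_zero_iff_mem]
      show Q _ = 0
      rw [map_add, hsmul, hsmul, hsum]
    have hg0 : g 0 = 0 := by
      have := hI0 _ hmem
      simpa [hzdef, constantCoeff_X] using this
    have hg1' : g 1 = 0 := by
      have hL := hLI _ hmem
      rw [map_add] at hL
      have hLC : ∀ r : ℝ, L (Cc r * 1) = 0 := by
        intro r
        rw [mul_one]
        simp [hLapp, MvPowerSeries.coeff_C, Finsupp.single_eq_zero]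
      have hLz : L (Cc (g 1) * z) = g 1 := by
        rw [hzdef, hLmul _ _ (constantCoeff_X 2)]
        simp [hLapp, hcoeffX, MvPowerSeries.constantCoeff_C]
      rw [hLC, hLz, zero_add] at hL
      exact hL
    intro i
    fin_cases i
    · exact hg0
    · exact hg1'
  have hsp : ⊤ ≤ Submodule.span ℝ (Set.range v) := by
    rintro w -
    obtain ⟨f, rfl⟩ := Ideal.Quotient.mk_surjective (I := I) w
    obtain ⟨s, t, hw⟩ := hspan f
    show Q f ∈ _
    rw [hw]
    exact add_mem (Submodule.smul_mem _ _ (Submodule.subset_span ⟨0, rfl⟩))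
      (Submodule.smul_mem _ _ (Submodule.subset_span ⟨1, rfl⟩))
  let b : Module.Basis (Fin 2) ℝ (AA ⧸ I) := Module.Basis.mk hli hsp
  have hb0 : b 0 = Q 1 := by simp [b, Module.Basis.mk_apply, hvdef]
  have hb1 : b 1 = Q z := by simp [b, Module.Basis.mk_apply, hvdef]
  refine ⟨?_, ⟨b, hb0, hb1⟩⟩
  rw [Module.finrank_eq_card_basis b, Fintype.card_fin]

end Stmt10Aux

/-- For `I = ⟨x − y + xy, y − z + yz, z − x + zx⟩ ⊆ ℝ[[x,y,z]]`, the
quotient `ℝ[[x,y,z]]/I` is a 2-dimensional real vector space with basis the classes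
of `1` and `z`. -/
theorem stmt10 :
    letI A := MvPowerSeries (Fin 3) ℝ
    letI x : A := MvPowerSeries.X 0
    letI y : A := MvPowerSeries.X 1
    letI z : A := MvPowerSeries.X 2
    letI I : Ideal A := Ideal.span {x - y + x * y, y - z + y * z, z - x + z * x}
    Module.finrank ℝ (A ⧸ I) = 2 ∧
    ∃ b : Module.Basis (Fin 2) ℝ (A ⧸ I),
      b 0 = Ideal.Quotient.mk I 1 ∧ b 1 = Ideal.Quotient.mk I z := by
  exact stmt10_main _ rfl
end

section
/- In ℝ[[x,y,z]] with I = ⟨x − y + xy, y − z + yz, z − x + zx⟩, the element z² belongs to I. -/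
theorem stmt11_aux (A : Type) [CommRing A] [Algebra ℝ A] (x y z : A) :
    z ^ 2 ∈ Ideal.span {x - y + x * y, y - z + y * z, z - x + z * x} := by
  set g1 : A := x - y + x * y with hg1
  set g2 : A := y - z + y * z with hg2
  set g3 : A := z - x + z * x with hg3
  set I : Ideal A := Ideal.span {g1, g2, g3} with hI
  have h1 : g1 ∈ I := Ideal.subset_span (by simp)
  have h2 : g2 ∈ I := Ideal.subset_span (by simp)
  have h3 : g3 ∈ I := Ideal.subset_span (by simp)
  have hm : (1 - z ^ 2) * g1 + (1 - 2 * z + g3) * g2 + (1 + 2 * z) * g3 ∈ I :=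
    I.add_mem (I.add_mem (I.mul_mem_left _ h1) (I.mul_mem_left _ h2)) (I.mul_mem_left _ h3)
  have key : z ^ 2 = (1/3 : ℝ) •
      ((1 - z ^ 2) * g1 + (1 - 2 * z + g3) * g2 + (1 + 2 * z) * g3) := by
    have h : (1 - z ^ 2) * g1 + (1 - 2 * z + g3) * g2 + (1 + 2 * z) * g3 = 3 * z ^ 2 := by
      rw [hg1, hg2, hg3]; ring
    rw [h, Algebra.smul_def, show ((3 : A)) = algebraMap ℝ A 3 by rw [map_ofNat], ← mul_assoc, ← map_mul]
    norm_num
  rw [key]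
  exact Submodule.smul_of_tower_mem I _ hm

/-- In `ℝ[[x,y,z]]` with `I = ⟨x − y + xy, y − z + yz, z − x + zx⟩`,
the element `z²` belongs to `I`. -/
theorem stmt11 :
    letI A := MvPowerSeries (Fin 3) ℝ
    letI x : A := MvPowerSeries.X 0
    letI y : A := MvPowerSeries.X 1
    letI z : A := MvPowerSeries.X 2
    z ^ 2 ∈ Ideal.span {x - y + x * y, y - z + y * z, z - x + z * x} := by
  exact stmt11_aux _ _ _ _
end
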